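/- Let Γ : Fin N → Finset (Fin M) be a left-D-regular neighborhood map of a bipartite graph, i.e. |Γ(i)| = D for every left vertex i. Let A be a real number and K a natural number, and assume that for every S ⊆ Fin N with |S| ≤ K one has |⋃_{i∈S} Γ(i)| ≥ A·|S|. Then for every S ⊆ Fin N with |S| ≤ K, the number of right vertices j ∈ Fin M that belong to Γ(i) for exactly one i ∈ S is at least (2A − D)·|S|. -/

import Mathlib

open Finset

/-- Unique-neighbor bound for bipartite expanders: if `Γ` is left-`D`-regular
and every `S` with `|S| ≤ K` satisfies `|Γ(S)| ≥ A·|S|`, then every such `S` has at least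
`(2A − D)·|S|` unique neighbors (right vertices adjacent to exactly one `i ∈ S`). -/
theorem stmt_4 {N M : ℕ} (D : ℕ) (Γ : Fin N → Finset (Fin M))
    (hreg : ∀ i, (Γ i).card = D) (A : ℝ) (K : ℕ)
    (hexp : ∀ S : Finset (Fin N), S.card ≤ K → A * S.card ≤ ((S.biUnion Γ).card : ℝ)) :
    ∀ S : Finset (Fin N), S.card ≤ K →
      (2 * A - D) * S.card ≤
        ((univ.filter fun j => (S.filter fun i => j ∈ Γ i).card = 1).card : ℝ) := by
  intro S hS
  set T := S.biUnion Γ with hT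
  set deg : Fin M → ℕ := fun j => (S.filter fun i => j ∈ Γ i).card with hdeg
  set U := univ.filter fun j => deg j = 1 with hU
  -- total degree count
  have key : ∑ j ∈ T, deg j = D * S.card := by
    have h1 : ∑ j : Fin M, deg j = D * S.card := by
      simp only [hdeg, Finset.card_filter]
      rw [Finset.sum_comm]
      have : ∀ i ∈ S, (∑ j : Fin M, if j ∈ Γ i then 1 else 0) = D := by
        intro i _
        simp [Finset.sum_ite_mem, hreg i]
      rw [Finset.sum_congr rfl this]
      simp [mul_comm]
    rw [← h1]
    apply Finset.sum_subset (Finset.subset_univ T)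
    intro j _ hjT
    by_contra h
    have : ∃ i ∈ S, j ∈ Γ i := by
      have : (S.filter fun i => j ∈ Γ i).Nonempty := Finset.card_pos.mp (Nat.pos_of_ne_zero h)
      obtain ⟨i, hi⟩ := this
      exact ⟨i, (Finset.mem_filter.mp hi).1, (Finset.mem_filter.mp hi).2⟩
    exact hjT (Finset.mem_biUnion.mpr this)
  -- unique neighbors are in T
  have hUT : U = T.filter fun j => deg j = 1 := by
    ext j
    simp only [hU, Finset.mem_filter, Finset.mem_univ, true_and]
    refine ⟨fun h1 => ⟨?_, h1⟩, fun h => h.2⟩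
    have : (S.filter fun i => j ∈ Γ i).Nonempty := by
      rw [← Finset.card_pos]; show 0 < deg j; omega
    obtain ⟨i, hi⟩ := this
    exact Finset.mem_biUnion.mpr ⟨i, (Finset.mem_filter.mp hi).1, (Finset.mem_filter.mp hi).2⟩
  -- per-vertex bound: 2 ≤ deg j + (if deg j = 1 then 1 else 0) for j ∈ T
  have hmain : 2 * T.card ≤ D * S.card + U.card := by
    have h2 : ∀ j ∈ T, 2 ≤ deg j + (if deg j = 1 then 1 else 0) := by
      intro j hj
      have hpos : 1 ≤ deg j := by
        rw [Nat.one_le_iff_ne_zero]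
        intro h0
        obtain ⟨i, hiS, hiΓ⟩ := Finset.mem_biUnion.mp hj
        have : i ∈ S.filter fun i => j ∈ Γ i := Finset.mem_filter.mpr ⟨hiS, hiΓ⟩
        simp [hdeg, Finset.card_eq_zero] at h0
        have : i ∉ S.filter fun i => j ∈ Γ i := fun hm => h0 hiS (Finset.mem_filter.mp hm).2
        exact this (Finset.mem_filter.mpr ⟨hiS, hiΓ⟩)
      by_cases h1 : deg j = 1
      · simp [h1]
      · have : 2 ≤ deg j := by omega
        omega
    calc 2 * T.card = ∑ _j ∈ T, 2 := by simp [mul_comm]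
      _ ≤ ∑ j ∈ T, (deg j + (if deg j = 1 then 1 else 0)) := Finset.sum_le_sum h2
      _ = (∑ j ∈ T, deg j) + ∑ j ∈ T, (if deg j = 1 then 1 else 0) := Finset.sum_add_distrib
      _ = D * S.card + U.card := by rw [key, hUT, Finset.card_filter]
  -- conclude over the reals
  have hexpS := hexp S hS
  have hmainR : 2 * (T.card : ℝ) ≤ (D : ℝ) * S.card + U.card := by
    exact_mod_cast hmain
  nlinarith [hexpS, hmainR]
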